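/- arXiv:1803.06216 — 11 statements merged into one kernel-verified Lean document; each statement's English description precedes it below -/
import Mathlib

section
/- Let R₁ and R₂ be two diagonal-anchored axis-parallel rectangles (each anchored either above or below the diagonal, with positive side lengths), and let L₁ and L₂ be their associated anchored L-frames. Then R₁ ∩ R₂ ≠ ∅ if and only if L₁ ∩ L₂ ≠ ∅. Consequently, the intersection graph of any finite family of diagonal-anchored rectangles equals the intersection graph of the associated family of diagonal-anchored L-frames. -/
/-- The above-anchored rectangle `R⁺(t,h,w) = [t, t+w] × [-t, -t+h]`. -/
def Rplus (t h w : ℝ) : Set (ℝ × ℝ) := Set.Icc t (t + w) ×ˢ Set.Icc (-t) (-t + h)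

/-- The below-anchored rectangle `R⁻(t,h,w) = [t-w, t] × [-t-h, -t]`. -/
def Rminus (t h w : ℝ) : Set (ℝ × ℝ) := Set.Icc (t - w) t ×ˢ Set.Icc (-t - h) (-t)

/-- The above-anchored L-frame `A(t,h,w) = ({t} × [-t, -t+h]) ∪ ([t, t+w] × {-t})`. -/
def Aframe (t h w : ℝ) : Set (ℝ × ℝ) :=
  ({t} : Set ℝ) ×ˢ Set.Icc (-t) (-t + h) ∪ Set.Icc t (t + w) ×ˢ ({-t} : Set ℝ)

/-- The below-anchored L-frame `B(t,h,w) = ({t} × [-t-h, -t]) ∪ ([t-w, t] × {-t})`. -/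
def Bframe (t h w : ℝ) : Set (ℝ × ℝ) :=
  ({t} : Set ℝ) ×ˢ Set.Icc (-t - h) (-t) ∪ Set.Icc (t - w) t ×ˢ ({-t} : Set ℝ)

/-- A diagonal-anchored rectangle, anchored above (`side = true`) or below (`side = false`). -/
def Rect (side : Bool) (t h w : ℝ) : Set (ℝ × ℝ) := if side then Rplus t h w else Rminus t h w

/-- The associated diagonal-anchored L-frame. -/
def Lfr (side : Bool) (t h w : ℝ) : Set (ℝ × ℝ) := if side then Aframe t h w else Bframe t h w

/-- The intersection graph of a family of subsets of the plane. -/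
def interGraph {V : Type*} (F : V → Set (ℝ × ℝ)) : SimpleGraph V where
  Adj u v := u ≠ v ∧ (F u ∩ F v).Nonempty
  symm := by
    constructor
    intro u v h
    exact ⟨h.1.symm, by rw [Set.inter_comm]; exact h.2⟩
  loopless := by
    constructor
    intro u h
    exact h.1 rfl

lemma memp {x y a b c d : ℝ} (h1 : a ≤ x) (h2 : x ≤ b) (h3 : c ≤ y) (h4 : y ≤ d) :
    ((x, y) : ℝ × ℝ) ∈ Set.Icc a b ×ˢ Set.Icc c d := ⟨⟨h1, h2⟩, h3, h4⟩

lemma memv {x y t c d : ℝ} (h : x = t) (h3 : c ≤ y) (h4 : y ≤ d) :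
    ((x, y) : ℝ × ℝ) ∈ ({t} : Set ℝ) ×ˢ Set.Icc c d := ⟨h, h3, h4⟩

lemma memh {x y u a b : ℝ} (h1 : a ≤ x) (h2 : x ≤ b) (h : y = u) :
    ((x, y) : ℝ × ℝ) ∈ Set.Icc a b ×ˢ ({u} : Set ℝ) := ⟨⟨h1, h2⟩, h⟩

lemma frame_sub (s : Bool) (t h w : ℝ) (hh : 0 < h) (hw : 0 < w) :
    Lfr s t h w ⊆ Rect s t h w := by
  cases s
  · rintro ⟨x, y⟩ (⟨hx, hy1, hy2⟩ | ⟨⟨hx1, hx2⟩, hy⟩)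
    · have hx' : x = t := hx
      have h1 : -t - h ≤ y := hy1
      have h2 : y ≤ -t := hy2
      exact memp (by linarith) (by linarith) h1 h2
    · have hy' : y = -t := hy
      have h1 : t - w ≤ x := hx1
      have h2 : x ≤ t := hx2
      exact memp h1 h2 (by linarith) (by linarith)
  · rintro ⟨x, y⟩ (⟨hx, hy1, hy2⟩ | ⟨⟨hx1, hx2⟩, hy⟩)
    · have hx' : x = t := hx
      have h1 : -t ≤ y := hy1
      have h2 : y ≤ -t + h := hy2
      exact memp (by linarith) (by linarith) h1 h2
    · have hy' : y = -t := hy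
      have h1 : t ≤ x := hx1
      have h2 : x ≤ t + w := hx2
      exact memp h1 h2 (by linarith) (by linarith)

lemma key (s₁ s₂ : Bool) (t₁ t₂ h₁ h₂ w₁ w₂ : ℝ)
    (hh₁ : 0 < h₁) (hw₁ : 0 < w₁) (hh₂ : 0 < h₂) (hw₂ : 0 < w₂) :
    (Rect s₁ t₁ h₁ w₁ ∩ Rect s₂ t₂ h₂ w₂).Nonempty ↔
      (Lfr s₁ t₁ h₁ w₁ ∩ Lfr s₂ t₂ h₂ w₂).Nonempty := by
  constructor
  · rintro ⟨⟨x, y⟩, hp1, hp2⟩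
    cases s₁ <;> cases s₂ <;>
      simp only [Rect, Lfr, Rplus, Rminus, if_true, if_false] at hp1 hp2 ⊢ <;>
      obtain ⟨⟨a1, a2⟩, a3, a4⟩ := hp1 <;> obtain ⟨⟨b1, b2⟩, b3, b4⟩ := hp2
    · rcases le_total t₁ t₂ with hle | hle
      · exact ⟨(t₁, -t₂), Or.inl (memv rfl (by linarith) (by linarith)),
          Or.inr (memh (by linarith) (by linarith) rfl)⟩
      · exact ⟨(t₂, -t₁), Or.inr (memh (by linarith) (by linarith) rfl),
          Or.inl (memv rfl (by linarith) (by linarith))⟩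
    · have ht : t₁ = t₂ := by linarith
      subst ht
      exact ⟨(t₁, -t₁), Or.inl (memv rfl (by linarith) (le_refl _)),
        Or.inl (memv rfl (le_refl _) (by linarith))⟩
    · have ht : t₁ = t₂ := by linarith
      subst ht
      exact ⟨(t₁, -t₁), Or.inl (memv rfl (le_refl _) (by linarith)),
        Or.inl (memv rfl (by linarith) (le_refl _))⟩
    · rcases le_total t₁ t₂ with hle | hle
      · exact ⟨(t₂, -t₁), Or.inr (memh (by linarith) (by linarith) rfl),
          Or.inl (memv rfl (by linarith) (by linarith))⟩
      · exact ⟨(t₁, -t₂), Or.inl (memv rfl (by linarith) (by linarith)),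
          Or.inr (memh (by linarith) (by linarith) rfl)⟩
  · rintro ⟨p, hp1, hp2⟩
    exact ⟨p, frame_sub s₁ t₁ h₁ w₁ hh₁ hw₁ hp1, frame_sub s₂ t₂ h₂ w₂ hh₂ hw₂ hp2⟩

/-- Two diagonal-anchored rectangles (with positive side lengths) intersect iff their
associated diagonal-anchored L-frames intersect; consequently the intersection graph of any
finite family of diagonal-anchored rectangles equals the intersection graph of the
associated family of diagonal-anchored L-frames. -/
theorem rect_inter_iff_frame_inter_and_graphs_eq :
    (∀ (s₁ s₂ : Bool) (t₁ t₂ h₁ h₂ w₁ w₂ : ℝ),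
      0 < h₁ → 0 < w₁ → 0 < h₂ → 0 < w₂ →
      ((Rect s₁ t₁ h₁ w₁ ∩ Rect s₂ t₂ h₂ w₂).Nonempty ↔
        (Lfr s₁ t₁ h₁ w₁ ∩ Lfr s₂ t₂ h₂ w₂).Nonempty)) ∧
    (∀ (V : Type) [Fintype V] (s : V → Bool) (t h w : V → ℝ),
      (∀ v, 0 < h v) → (∀ v, 0 < w v) →
      interGraph (fun v => Rect (s v) (t v) (h v) (w v)) =
        interGraph (fun v => Lfr (s v) (t v) (h v) (w v))) := by
  refine ⟨fun s₁ s₂ t₁ t₂ h₁ h₂ w₁ w₂ a b c d => key s₁ s₂ t₁ t₂ h₁ h₂ w₁ w₂ a b c d,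
    fun V _ s t h w hh hw => ?_⟩
  ext u v
  show (u ≠ v ∧ _) ↔ (u ≠ v ∧ _)
  exact and_congr_right fun _ =>
    key (s u) (s v) (t u) (t v) (h u) (h v) (w u) (w v) (hh u) (hw u) (hh v) (hw v)
end

section
/- Let (F v), v ∈ V, be a finite family in which each F v is either an above-anchored L-frame A(t v, h v, w v) or a below-anchored L-frame B(t v, h v, w v), let G be its intersection graph, and let X ⊆ V be the set of indices carrying above-anchored frames. Then for every dominating set D of G there exists a set D' ⊆ X with |D'| ≤ |D| such that every u ∈ X lies in D' or is adjacent in G to a member of D'. (Hence the optimum for dominating the above-anchored frames using only above-anchored frames is at most the optimum for the whole instance.) -/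
/-- A set of vertices is a dominating set: every vertex is in it or adjacent to a member. -/
def IsDomSet {V : Type*} (G : SimpleGraph V) (D : Set V) : Prop :=
  ∀ v, v ∈ D ∨ ∃ u ∈ D, G.Adj u v

lemma Aframe_above {t h w : ℝ} {p : ℝ × ℝ} (hp : p ∈ Aframe t h w) :
    0 ≤ p.1 + p.2 ∧ (p.1 + p.2 = 0 → p.1 = t) := by
  rcases hp with ⟨h1, h2⟩ | ⟨h1, h2⟩
  · simp only [Set.mem_singleton_iff] at h1
    rcases h2 with ⟨h2a, _⟩
    exact ⟨by linarith, fun _ => h1⟩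
  · simp only [Set.mem_singleton_iff] at h2
    rcases h1 with ⟨h1a, _⟩
    exact ⟨by linarith, fun hs => by linarith⟩

lemma Bframe_below {t h w : ℝ} {p : ℝ × ℝ} (hp : p ∈ Bframe t h w) :
    p.1 + p.2 ≤ 0 ∧ (p.1 + p.2 = 0 → p.1 = t) := by
  rcases hp with ⟨h1, h2⟩ | ⟨h1, h2⟩
  · simp only [Set.mem_singleton_iff] at h1
    rcases h2 with ⟨_, h2b⟩
    exact ⟨by linarith, fun _ => h1⟩
  · simp only [Set.mem_singleton_iff] at h2
    rcases h1 with ⟨_, h1b⟩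
    exact ⟨by linarith, fun hs => by linarith⟩

lemma corner_mem_Aframe {t h w : ℝ} (hh : 0 ≤ h) : (t, -t) ∈ Aframe t h w :=
  Or.inl ⟨rfl, le_refl _, by dsimp only; linarith⟩

/-- For a family of diagonal-anchored L-frames (each anchored above or below the diagonal),
with `X` the indices of the above-anchored frames: for every dominating set `D` of the
intersection graph there is a set `D' ⊆ X` with `|D'| ≤ |D|` such that every `u ∈ X` lies in
`D'` or is adjacent to a member of `D'`. -/
theorem above_anchored_dominated_from_above {V : Type*} [Fintype V]
    (s : V → Bool) (t h w : V → ℝ)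
    (hh : ∀ v, 0 ≤ h v) (hw : ∀ v, 0 ≤ w v)
    (F : V → Set (ℝ × ℝ))
    (hF : ∀ v, F v = if s v then Aframe (t v) (h v) (w v) else Bframe (t v) (h v) (w v))
    (G : SimpleGraph V) (hG : G = interGraph F)
    (X : Set V) (hX : X = {v | s v = true})
    (D : Finset V) (hD : IsDomSet G ↑D) :
    ∃ D' : Finset V, ↑D' ⊆ X ∧ D'.card ≤ D.card ∧
      ∀ u ∈ X, u ∈ D' ∨ ∃ d ∈ D', G.Adj d u := by
  classical
  subst hG hX
  -- replacement function
  let f : V → V := fun d =>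
    if s d then d
    else if hd : ∃ u, s u = true ∧ t u = t d then hd.choose else d
  refine ⟨(D.image f).filter (fun v => s v = true), ?_, ?_, ?_⟩
  · intro v hv
    simp only [Finset.coe_filter, Set.mem_setOf_eq] at hv
    exact hv.2
  · exact le_trans (Finset.card_filter_le _ _) (Finset.card_image_le)
  · intro u hu
    simp only [Set.mem_setOf_eq] at hu
    rcases hD u with huD | ⟨d, hdD, hadj⟩
    · left
      have hfu : f u = u := by simp [f, hu]
      refine Finset.mem_filter.mpr ⟨?_, hu⟩
      rw [← hfu]
      exact Finset.mem_image_of_mem f huD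
    · rcases hadj with ⟨hne, p, hpd, hpu⟩
      by_cases hsd : s d = true
      · right
        refine ⟨d, ?_, hne, p, hpd, hpu⟩
        refine Finset.mem_filter.mpr ⟨?_, hsd⟩
        have : f d = d := by simp [f, hsd]
        rw [← this]; exact Finset.mem_image_of_mem f hdD
      · -- d is below-anchored, u above: corners coincide
        have hFd : F d = Bframe (t d) (h d) (w d) := by
          rw [hF d]; simp [hsd]
        have hFu : F u = Aframe (t u) (h u) (w u) := by
          rw [hF u]; simp [hu]
        rw [hFd] at hpd; rw [hFu] at hpu
        have hB := Bframe_below hpd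
        have hA := Aframe_above hpu
        have hz : p.1 + p.2 = 0 := le_antisymm hB.1 hA.1
        have htud : t u = t d := by rw [← hB.2 hz, ← hA.2 hz]
        have hex : ∃ u', s u' = true ∧ t u' = t d := ⟨u, hu, htud⟩
        have hfd : f d = hex.choose := by simp [f, hsd, hex]
        obtain ⟨hsu0, htu0⟩ := hex.choose_spec
        have hmem : f d ∈ (D.image f).filter (fun v => s v = true) := by
          refine Finset.mem_filter.mpr ⟨Finset.mem_image_of_mem f hdD, ?_⟩
          rw [hfd]; exact hsu0
        by_cases heq : f d = u
        · left; rwa [heq] at hmem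
        · right
          refine ⟨f d, hmem, heq, (t u, -t u), ?_, ?_⟩
          · rw [hF (f d)]
            have : s (f d) = true := by rw [hfd]; exact hsu0
            rw [if_pos this]
            have : t (f d) = t u := by rw [hfd, htu0, htud]
            rw [← this]
            exact corner_mem_Aframe (hh _)
          · rw [hFu]
            exact corner_mem_Aframe (hh _)
end

section
/- Under the setup, no two top arcs cross: there do not exist pairs (b₁,r₁) ∈ E' and (b₂,r₂) ∈ E', each admitting a top witness, such that, writing α = min(t b₁, t r₁), β = max(t b₁, t r₁), γ = min(t b₂, t r₂), δ = max(t b₂, t r₂), the intervals (α,β) and (γ,δ) interleave. -/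
/-- Euclidean distance between the corners `(t b, -(t b))` and `(t r, -(t r))` of the
L-frames indexed by `b` and `r`. -/
noncomputable def cornerDist {V : Type*} (t : V → ℝ) (b r : V) : ℝ :=
  Real.sqrt ((t b - t r) ^ 2 + ((-(t b)) - (-(t r))) ^ 2)

/-- `(b,r) ∈ S(u)`: `b ∈ B`, `r ∈ R`, and both frames `F b` and `F r` intersect `F u`. -/
def InS {V : Type*} (F : V → Set (ℝ × ℝ)) (B R : Set V) (u b r : V) : Prop :=
  b ∈ B ∧ r ∈ R ∧ (F b ∩ F u).Nonempty ∧ (F r ∩ F u).Nonempty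

/-- `u` is a witness of `(b,r)`: `(b,r) ∈ S(u)` and the distance between the corners of
`F b` and `F r` is minimum among all pairs in `S(u)`. -/
def IsWitness {V : Type*} (F : V → Set (ℝ × ℝ)) (t : V → ℝ) (B R : Set V)
    (u b r : V) : Prop :=
  InS F B R u b r ∧ ∀ b' r', InS F B R u b' r' → cornerDist t b r ≤ cornerDist t b' r'

/-- `(b,r) ∈ E'`: the pair admits a witness. -/
def InE' {V : Type*} (F : V → Set (ℝ × ℝ)) (t : V → ℝ) (B R : Set V) (b r : V) : Prop :=
  ∃ u, IsWitness F t B R u b r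

/-- `u` is a top witness of `(b,r)`. -/
def TopWitness {V : Type*} (F : V → Set (ℝ × ℝ)) (t : V → ℝ) (B R : Set V)
    (u b r : V) : Prop :=
  IsWitness F t B R u b r ∧ t b ≤ t u ∧ t r ≤ t u

/-- `u` is a down witness of `(b,r)`. -/
def DownWitness {V : Type*} (F : V → Set (ℝ × ℝ)) (t : V → ℝ) (B R : Set V)
    (u b r : V) : Prop :=
  IsWitness F t B R u b r ∧ t u ≤ t b ∧ t u ≤ t r

/-- `u` is a mixed witness of `(b,r)`. -/
def MixedWitness {V : Type*} (F : V → Set (ℝ × ℝ)) (t : V → ℝ) (B R : Set V)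
    (u b r : V) : Prop :=
  IsWitness F t B R u b r ∧ min (t b) (t r) < t u ∧ t u < max (t b) (t r)

/-- Open intervals `(p,q)` and `(r,s)` interleave. -/
def Interleave (p q r s : ℝ) : Prop :=
  (p < r ∧ r < q ∧ q < s) ∨ (r < p ∧ p < s ∧ s < q)


lemma cornerDist_eq {V : Type*} (t : V → ℝ) (b r : V) :
    cornerDist t b r = Real.sqrt 2 * |t b - t r| := by
  unfold cornerDist
  rw [show (t b - t r) ^ 2 + ((-(t b)) - (-(t r))) ^ 2 = 2 * (t b - t r) ^ 2 by ring,
    Real.sqrt_mul (by norm_num), Real.sqrt_sq_eq_abs]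

lemma witness_min_abs {V : Type*} (F : V → Set (ℝ × ℝ)) (t : V → ℝ) (B R : Set V)
    (u b r b' r' : V) (hwit : IsWitness F t B R u b r) (hS : InS F B R u b' r') :
    |t b - t r| ≤ |t b' - t r'| := by
  have hle := hwit.2 b' r' hS
  rw [cornerDist_eq, cornerDist_eq] at hle
  have h2 : (0:ℝ) < Real.sqrt 2 := Real.sqrt_pos.2 (by norm_num)
  exact le_of_mul_le_mul_left hle h2

lemma closerB {V : Type*} (F : V → Set (ℝ × ℝ)) (t : V → ℝ) (B R : Set V) (u b r z : V)
    (hwit : IsWitness F t B R u b r) (hzB : z ∈ B) (hzu : (F z ∩ F u).Nonempty)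
    (hlt : |t z - t r| < |t b - t r|) : False := by
  have := witness_min_abs F t B R u b r z r hwit ⟨hzB, hwit.1.2.1, hzu, hwit.1.2.2.2⟩
  linarith

lemma closerR {V : Type*} (F : V → Set (ℝ × ℝ)) (t : V → ℝ) (B R : Set V) (u b r z : V)
    (hwit : IsWitness F t B R u b r) (hzR : z ∈ R) (hzu : (F z ∩ F u).Nonempty)
    (hlt : |t b - t z| < |t b - t r|) : False := by
  have := witness_min_abs F t B R u b r b z hwit ⟨hwit.1.1, hzR, hwit.1.2.2.1, hzu⟩
  linarith

lemma inter_reach {ta ha wa tu hu wu : ℝ} (hlt : ta < tu)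
    (hne : (Aframe ta ha wa ∩ Aframe tu hu wu).Nonempty) :
    tu ≤ ta + wa ∧ tu - ta ≤ hu := by
  obtain ⟨p, hpa, hpu⟩ := hne
  simp only [Aframe, Set.mem_union, Set.mem_prod, Set.mem_singleton_iff, Set.mem_Icc] at hpa hpu
  rcases hpa with ⟨h1, h2, h3⟩ | ⟨⟨h1, h2⟩, h3⟩ <;>
    rcases hpu with ⟨g1, g2, g3⟩ | ⟨⟨g1, g2⟩, g3⟩ <;>
    exact ⟨by linarith, by linarith⟩

lemma inter_mk {ta ha wa tu hu wu : ℝ} (h0 : ta ≤ tu) (h1 : tu ≤ ta + wa)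
    (h2 : tu - ta ≤ hu) : (Aframe ta ha wa ∩ Aframe tu hu wu).Nonempty := by
  refine ⟨(tu, -ta), Or.inr ?_, Or.inl ?_⟩
  · exact ⟨Set.mem_Icc.2 ⟨h0, h1⟩, rfl⟩
  · refine ⟨rfl, Set.mem_Icc.2 ⟨?_, ?_⟩⟩ <;> show _ ≤ _ <;> simp <;> linarith

lemma cross_top {V : Type*} (t h w : V → ℝ)
    (F : V → Set (ℝ × ℝ)) (hF : ∀ v, F v = Aframe (t v) (h v) (w v))
    (B R : Set V) (b₁ r₁ b₂ r₂ u₁ u₂ : V)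
    (h1 : TopWitness F t B R u₁ b₁ r₁) (h2 : TopWitness F t B R u₂ b₂ r₂)
    (hag : min (t b₁) (t r₁) < min (t b₂) (t r₂))
    (hgb : min (t b₂) (t r₂) < max (t b₁) (t r₁))
    (hbd : max (t b₁) (t r₁) < max (t b₂) (t r₂)) : False := by
  have hbu1 : max (t b₁) (t r₁) ≤ t u₁ := max_le h1.2.1 h1.2.2
  have hdu2 : max (t b₂) (t r₂) ≤ t u₂ := max_le h2.2.1 h2.2.2
  -- the frame of pair 1 with smaller t gives a bound on h u₁
  have hy1 : t u₁ - min (t b₁) (t r₁) ≤ h u₁ := by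
    rcases min_cases (t b₁) (t r₁) with ⟨he, _⟩ | ⟨he, _⟩
    · have hne := h1.1.1.2.2.1
      rw [hF b₁, hF u₁] at hne
      have := (inter_reach (by linarith [min_le_left (t b₁) (t r₁)] : t b₁ < t u₁) hne).2
      linarith
    · have hne := h1.1.1.2.2.2
      rw [hF r₁, hF u₁] at hne
      have := (inter_reach (by linarith [min_le_right (t b₁) (t r₁)] : t r₁ < t u₁) hne).2
      linarith
  -- the frame of pair 2 with smaller t: reach facts
  have hz2 : ∃ z, t z = min (t b₂) (t r₂) ∧ (z ∈ B ∨ z ∈ R) ∧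
      t u₂ ≤ t z + w z ∧ t u₂ - t z ≤ h u₂ := by
    rcases min_cases (t b₂) (t r₂) with ⟨he, _⟩ | ⟨he, _⟩
    · have hne := h2.1.1.2.2.1
      rw [hF b₂, hF u₂] at hne
      have hr := inter_reach (by linarith : t b₂ < t u₂) hne
      exact ⟨b₂, he.symm, Or.inl h2.1.1.1, hr.1, hr.2⟩
    · have hne := h2.1.1.2.2.2
      rw [hF r₂, hF u₂] at hne
      have hr := inter_reach (by linarith : t r₂ < t u₂) hne
      exact ⟨r₂, he.symm, Or.inr h2.1.1.2.1, hr.1, hr.2⟩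
  obtain ⟨z₂, hz₂g, hz₂BR, hz₂w, hz₂h⟩ := hz2
  rcases le_total (t u₁) (t u₂) with htu | htu
  · -- z₂ intersects F u₁
    have hzu1 : (F z₂ ∩ F u₁).Nonempty := by
      rw [hF z₂, hF u₁]
      exact inter_mk (by linarith) (by linarith) (by linarith)
    rcases hz₂BR with hzB | hzR
    · refine closerB F t B R u₁ b₁ r₁ z₂ h1.1 hzB hzu1 ?_
      have habs : |t z₂ - t r₁| < max (t b₁) (t r₁) - min (t b₁) (t r₁) :=
        abs_sub_lt_iff.2 ⟨by linarith [min_le_right (t b₁) (t r₁)],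
          by linarith [le_max_right (t b₁) (t r₁)]⟩
      rw [max_sub_min_eq_abs] at habs
      simpa [abs_sub_comm] using habs
    · refine closerR F t B R u₁ b₁ r₁ z₂ h1.1 hzR hzu1 ?_
      have habs : |t b₁ - t z₂| < max (t b₁) (t r₁) - min (t b₁) (t r₁) :=
        abs_sub_lt_iff.2 ⟨by linarith [le_max_left (t b₁) (t r₁)],
          by linarith [min_le_left (t b₁) (t r₁)]⟩
      rw [max_sub_min_eq_abs] at habs
      simpa [abs_sub_comm] using habs
  · -- the frame of pair 1 with larger t intersects F u₂
    have hz1 : ∃ z, t z = max (t b₁) (t r₁) ∧ (z ∈ B ∨ z ∈ R) ∧ t u₁ ≤ t z + w z := by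
      rcases max_cases (t b₁) (t r₁) with ⟨he, _⟩ | ⟨he, _⟩
      · have hne := h1.1.1.2.2.1
        rw [hF b₁, hF u₁] at hne
        exact ⟨b₁, he.symm, Or.inl h1.1.1.1,
          (inter_reach (by linarith : t b₁ < t u₁) hne).1⟩
      · have hne := h1.1.1.2.2.2
        rw [hF r₁, hF u₁] at hne
        exact ⟨r₁, he.symm, Or.inr h1.1.1.2.1,
          (inter_reach (by linarith : t r₁ < t u₁) hne).1⟩
    obtain ⟨z₁, hz₁b, hz₁BR, hz₁w⟩ := hz1
    have hzu2 : (F z₁ ∩ F u₂).Nonempty := by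
      rw [hF z₁, hF u₂]
      exact inter_mk (by linarith) (by linarith) (by linarith)
    rcases hz₁BR with hzB | hzR
    · refine closerB F t B R u₂ b₂ r₂ z₁ h2.1 hzB hzu2 ?_
      have habs : |t z₁ - t r₂| < max (t b₂) (t r₂) - min (t b₂) (t r₂) :=
        abs_sub_lt_iff.2 ⟨by linarith [min_le_right (t b₂) (t r₂)],
          by linarith [le_max_right (t b₂) (t r₂)]⟩
      rw [max_sub_min_eq_abs] at habs
      simpa [abs_sub_comm] using habs
    · refine closerR F t B R u₂ b₂ r₂ z₁ h2.1 hzR hzu2 ?_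
      have habs : |t b₂ - t z₁| < max (t b₂) (t r₂) - min (t b₂) (t r₂) :=
        abs_sub_lt_iff.2 ⟨by linarith [le_max_left (t b₂) (t r₂)],
          by linarith [min_le_left (t b₂) (t r₂)]⟩
      rw [max_sub_min_eq_abs] at habs
      simpa [abs_sub_comm] using habs

/-- No two top arcs cross. -/
theorem no_two_top_arcs_cross {V : Type*} [Fintype V]
    (t h w : V → ℝ) (hh : ∀ v, 0 ≤ h v) (hw : ∀ v, 0 ≤ w v)
    (F : V → Set (ℝ × ℝ)) (hF : ∀ v, F v = Aframe (t v) (h v) (w v))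
    (B R : Set V) (hBR : Disjoint B R)
    (hB : IsDomSet (interGraph F) B) (hR : IsDomSet (interGraph F) R) :
    ¬ ∃ (b₁ r₁ b₂ r₂ u₁ u₂ : V),
        TopWitness F t B R u₁ b₁ r₁ ∧ TopWitness F t B R u₂ b₂ r₂ ∧
        Interleave (min (t b₁) (t r₁)) (max (t b₁) (t r₁))
          (min (t b₂) (t r₂)) (max (t b₂) (t r₂)) := by
  rintro ⟨b₁, r₁, b₂, r₂, u₁, u₂, h1, h2, hint⟩
  rcases hint with ⟨ha, hb, hc⟩ | ⟨ha, hb, hc⟩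
  · exact cross_top t h w F hF B R b₁ r₁ b₂ r₂ u₁ u₂ h1 h2 ha hb hc
  · exact cross_top t h w F hF B R b₂ r₂ b₁ r₁ u₂ u₁ h2 h1 ha hb hc
end

section
/- Under the setup, no two down arcs cross: there do not exist pairs (b₁,r₁) ∈ E' and (b₂,r₂) ∈ E', each admitting a down witness, such that, writing α = min(t b₁, t r₁), β = max(t b₁, t r₁), γ = min(t b₂, t r₂), δ = max(t b₂, t r₂), the intervals (α,β) and (γ,δ) interleave. -/
lemma Aframe_inter_of {tu hu wu tx hx wx : ℝ} (htu : tu ≤ tx)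
    (h1 : tx - tu ≤ wu) (h2 : tx - tu ≤ hx) :
    (Aframe tx hx wx ∩ Aframe tu hu wu).Nonempty := by
  refine ⟨(tx, -tu), ?_, ?_⟩
  · simp only [Aframe, Set.mem_union, Set.mem_prod, Set.mem_singleton_iff, Set.mem_Icc]
    exact Or.inl ⟨trivial, by linarith, by linarith⟩
  · simp only [Aframe, Set.mem_union, Set.mem_prod, Set.mem_singleton_iff, Set.mem_Icc]
    exact Or.inr ⟨⟨htu, by linarith⟩, trivial⟩

lemma Aframe_inter_extract {tu hu wu tx hx wx : ℝ} (hwu : 0 ≤ wu) (hhx : 0 ≤ hx)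
    (htu : tu ≤ tx) (hne : (Aframe tx hx wx ∩ Aframe tu hu wu).Nonempty) :
    tx - tu ≤ wu ∧ tx - tu ≤ hx := by
  obtain ⟨⟨px, py⟩, hpx, hpu⟩ := hne
  simp only [Aframe, Set.mem_union, Set.mem_prod, Set.mem_singleton_iff, Set.mem_Icc]
    at hpx hpu
  rcases hpx with ⟨e1, e2, e3⟩ | ⟨⟨e1, e2⟩, e3⟩ <;>
    rcases hpu with ⟨f1, f2, f3⟩ | ⟨⟨f1, f2⟩, f3⟩ <;>
    exact ⟨by linarith, by linarith⟩

lemma cornerDist_lt {V : Type*} (t : V → ℝ) {a b c d : V}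
    (habs : |t a - t b| < |t c - t d|) : cornerDist t a b < cornerDist t c d := by
  unfold cornerDist
  have h2 : (t a - t b) ^ 2 < (t c - t d) ^ 2 := by
    rw [← sq_abs (t a - t b), ← sq_abs (t c - t d)]
    exact pow_lt_pow_left₀ habs (abs_nonneg _) two_ne_zero
  apply Real.sqrt_lt_sqrt (by positivity)
  nlinarith

lemma down_no_inner {V : Type*} {F : V → Set (ℝ × ℝ)} {t : V → ℝ} {B R : Set V}
    {u b r v : V}
    (hd : DownWitness F t B R u b r)
    (hvBR : v ∈ B ∨ v ∈ R)
    (hlo : min (t b) (t r) < t v) (hhi : t v < max (t b) (t r))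
    (hvu : (F v ∩ F u).Nonempty) : False := by
  obtain ⟨⟨⟨hbB, hrR, hbu, hru⟩, hmin⟩, -, -⟩ := hd
  have hminb := min_le_left (t b) (t r)
  have hminr := min_le_right (t b) (t r)
  have hmaxb := le_max_left (t b) (t r)
  have hmaxr := le_max_right (t b) (t r)
  have hbr : |t b - t r| = max (t b) (t r) - min (t b) (t r) := by
    rw [abs_sub_comm]
    exact (max_sub_min_eq_abs (t b) (t r)).symm
  rcases hvBR with hvB | hvR
  · have hle := hmin v r ⟨hvB, hrR, hvu, hru⟩
    have : cornerDist t v r < cornerDist t b r := by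
      apply cornerDist_lt
      rw [hbr, abs_lt]
      constructor <;> linarith
    linarith
  · have hle := hmin b v ⟨hbB, hvR, hbu, hvu⟩
    have : cornerDist t b v < cornerDist t b r := by
      apply cornerDist_lt
      rw [hbr, abs_lt]
      constructor <;> linarith
    linarith

lemma crossing_aux {V : Type*} {t h w : V → ℝ} (hh : ∀ v, 0 ≤ h v) (hw : ∀ v, 0 ≤ w v)
    {F : V → Set (ℝ × ℝ)} (hF : ∀ v, F v = Aframe (t v) (h v) (w v))
    {B R : Set V} {u₁ b₁ r₁ u₂ b₂ r₂ v : V}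
    (hd₁ : DownWitness F t B R u₁ b₁ r₁) (hd₂ : DownWitness F t B R u₂ b₂ r₂)
    (hu : t u₂ ≤ t u₁)
    (hv : v = b₂ ∨ v = r₂)
    (hlo : min (t b₁) (t r₁) < t v) (hhi : t v < max (t b₁) (t r₁)) : False := by
  have hd₁' := hd₁
  obtain ⟨⟨⟨hbB2, hrR2, hbu2, hru2⟩, -⟩, htb2, htr2⟩ := hd₂
  obtain ⟨⟨⟨hbB1, hrR1, hbu1, hru1⟩, -⟩, htb1, htr1⟩ := hd₁'
  have hvBR : v ∈ B ∨ v ∈ R := by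
    rcases hv with rfl | rfl
    exacts [Or.inl hbB2, Or.inr hrR2]
  have hvu2 : (F v ∩ F u₂).Nonempty := by
    rcases hv with rfl | rfl
    exacts [hbu2, hru2]
  have htv2 : t u₂ ≤ t v := by
    rcases hv with rfl | rfl
    exacts [htb2, htr2]
  rw [hF v, hF u₂] at hvu2
  have hv2 := Aframe_inter_extract (hw u₂) (hh v) htv2 hvu2
  rw [hF b₁, hF u₁] at hbu1
  rw [hF r₁, hF u₁] at hru1
  have hb1 := Aframe_inter_extract (hw u₁) (hh b₁) htb1 hbu1
  have hr1 := Aframe_inter_extract (hw u₁) (hh r₁) htr1 hru1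
  have hmax : max (t b₁) (t r₁) - t u₁ ≤ w u₁ := by
    rcases max_cases (t b₁) (t r₁) with ⟨he, -⟩ | ⟨he, -⟩ <;>
      linarith [hb1.1, hr1.1]
  have h1 : t u₁ ≤ t v := by
    have := le_min htb1 htr1
    linarith
  have hinter : (Aframe (t v) (h v) (w v) ∩ Aframe (t u₁) (h u₁) (w u₁)).Nonempty :=
    Aframe_inter_of h1 (by linarith) (by linarith [hv2.2])
  exact down_no_inner hd₁ hvBR hlo hhi (by rw [hF v, hF u₁]; exact hinter)

/-- No two down arcs cross. -/
theorem no_two_down_arcs_cross {V : Type*} [Fintype V]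
    (t h w : V → ℝ) (hh : ∀ v, 0 ≤ h v) (hw : ∀ v, 0 ≤ w v)
    (F : V → Set (ℝ × ℝ)) (hF : ∀ v, F v = Aframe (t v) (h v) (w v))
    (B R : Set V) (hBR : Disjoint B R)
    (hB : IsDomSet (interGraph F) B) (hR : IsDomSet (interGraph F) R) :
    ¬ ∃ (b₁ r₁ b₂ r₂ u₁ u₂ : V),
        DownWitness F t B R u₁ b₁ r₁ ∧ DownWitness F t B R u₂ b₂ r₂ ∧
        Interleave (min (t b₁) (t r₁)) (max (t b₁) (t r₁))
          (min (t b₂) (t r₂)) (max (t b₂) (t r₂)) := by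
  rintro ⟨b₁, r₁, b₂, r₂, u₁, u₂, hd₁, hd₂, hint⟩
  have hex2min : ∃ v, (v = b₂ ∨ v = r₂) ∧ t v = min (t b₂) (t r₂) := by
    rcases le_total (t b₂) (t r₂) with hc | hc
    · exact ⟨b₂, Or.inl rfl, (min_eq_left hc).symm⟩
    · exact ⟨r₂, Or.inr rfl, (min_eq_right hc).symm⟩
  have hex2max : ∃ v, (v = b₂ ∨ v = r₂) ∧ t v = max (t b₂) (t r₂) := by
    rcases le_total (t b₂) (t r₂) with hc | hc
    · exact ⟨r₂, Or.inr rfl, (max_eq_right hc).symm⟩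
    · exact ⟨b₂, Or.inl rfl, (max_eq_left hc).symm⟩
  have hex1min : ∃ v, (v = b₁ ∨ v = r₁) ∧ t v = min (t b₁) (t r₁) := by
    rcases le_total (t b₁) (t r₁) with hc | hc
    · exact ⟨b₁, Or.inl rfl, (min_eq_left hc).symm⟩
    · exact ⟨r₁, Or.inr rfl, (min_eq_right hc).symm⟩
  have hex1max : ∃ v, (v = b₁ ∨ v = r₁) ∧ t v = max (t b₁) (t r₁) := by
    rcases le_total (t b₁) (t r₁) with hc | hc
    · exact ⟨r₁, Or.inr rfl, (max_eq_right hc).symm⟩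
    · exact ⟨b₁, Or.inl rfl, (max_eq_left hc).symm⟩
  rcases hint with ⟨h1, h2, h3⟩ | ⟨h1, h2, h3⟩
  · rcases le_total (t u₂) (t u₁) with hu | hu
    · obtain ⟨v, hv, hveq⟩ := hex2min
      exact crossing_aux hh hw hF hd₁ hd₂ hu hv (by linarith) (by linarith)
    · obtain ⟨v, hv, hveq⟩ := hex1max
      exact crossing_aux hh hw hF hd₂ hd₁ hu hv (by linarith) (by linarith)
  · rcases le_total (t u₂) (t u₁) with hu | hu
    · obtain ⟨v, hv, hveq⟩ := hex2max
      exact crossing_aux hh hw hF hd₁ hd₂ hu hv (by linarith) (by linarith)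
    · obtain ⟨v, hv, hveq⟩ := hex1min
      exact crossing_aux hh hw hF hd₂ hd₁ hu hv (by linarith) (by linarith)
end

section
/- Under the setup, no mixed arc crosses a down arc: if (b₁,r₁) ∈ E' has a mixed witness u₁ and (b₂,r₂) ∈ E' has a down witness, then, writing b = max(t b₁, t r₁), γ = min(t b₂, t r₂) and δ = max(t b₂, t r₂), the open intervals (t u₁, b) and (γ, δ) do not interleave. -/
lemma mem_Aframe {t h w : ℝ} {p : ℝ × ℝ} :
    p ∈ Aframe t h w ↔ (p.1 = t ∧ -t ≤ p.2 ∧ p.2 ≤ -t + h) ∨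
      (t ≤ p.1 ∧ p.1 ≤ t + w ∧ p.2 = -t) := by
  simp only [Aframe, Set.mem_union, Set.mem_prod, Set.mem_singleton_iff, Set.mem_Icc,
    and_assoc]

lemma frame_inter {t h w t' h' w' : ℝ} (hw : 0 ≤ w) (hh' : 0 ≤ h') (hle : t ≤ t') :
    (Aframe t h w ∩ Aframe t' h' w').Nonempty ↔ (t' - t ≤ w ∧ t' - t ≤ h') := by
  constructor
  · rintro ⟨⟨x, y⟩, hp, hq⟩
    rw [mem_Aframe] at hp hq
    rcases hp with ⟨h1, h2, h3⟩ | ⟨h1, h2, h3⟩ <;>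
      rcases hq with ⟨g1, g2, g3⟩ | ⟨g1, g2, g3⟩ <;>
      exact ⟨by simp only [] at *; linarith, by simp only [] at *; linarith⟩
  · rintro ⟨h1, h2⟩
    refine ⟨(t', -t), mem_Aframe.mpr (Or.inr ⟨?_, ?_, ?_⟩),
      mem_Aframe.mpr (Or.inl ⟨?_, ?_, ?_⟩)⟩ <;> simp <;> linarith

lemma witness_contra {V : Type*} {F : V → Set (ℝ × ℝ)} {t : V → ℝ} {B R : Set V}
    {u b r b' r' : V} (hwit : IsWitness F t B R u b r)
    (hS : InS F B R u b' r') (hlt : |t b' - t r'| < |t b - t r|) : False := by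
  have hle := hwit.2 b' r' hS
  rw [cornerDist_eq, cornerDist_eq] at hle
  have h2 : (0:ℝ) < Real.sqrt 2 := Real.sqrt_pos.mpr (by norm_num)
  nlinarith [abs_nonneg (t b' - t r')]

lemma abs_eq_max_sub_min (a b : ℝ) : |a - b| = max a b - min a b := by
  rcases le_total a b with h' | h'
  · rw [abs_sub_comm, abs_of_nonneg (by linarith), max_eq_right h', min_eq_left h']
  · rw [abs_of_nonneg (by linarith), max_eq_left h', min_eq_right h']

/-- No mixed arc crosses a down arc. -/
theorem no_mixed_arc_crosses_down_arc {V : Type*} [Fintype V]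
    (t h w : V → ℝ) (hh : ∀ v, 0 ≤ h v) (hw : ∀ v, 0 ≤ w v)
    (F : V → Set (ℝ × ℝ)) (hF : ∀ v, F v = Aframe (t v) (h v) (w v))
    (B R : Set V) (hBR : Disjoint B R)
    (hB : IsDomSet (interGraph F) B) (hR : IsDomSet (interGraph F) R)
    (b₁ r₁ b₂ r₂ u₁ : V)
    (h₁ : MixedWitness F t B R u₁ b₁ r₁)
    (h₂ : ∃ u₂, DownWitness F t B R u₂ b₂ r₂) :
    ¬ Interleave (t u₁) (max (t b₁) (t r₁))
        (min (t b₂) (t r₂)) (max (t b₂) (t r₂)) := by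
  intro hint
  obtain ⟨hwit₁, hlo₁, hhi₁⟩ := h₁
  obtain ⟨hb₁B, hr₁R, hIb₁, hIr₁⟩ := hwit₁.1
  obtain ⟨u₂, hdw₂⟩ := h₂
  obtain ⟨hwit₂, hd₂b, hd₂r⟩ := hdw₂
  obtain ⟨hb₂B, hr₂R, hIb₂, hIr₂⟩ := hwit₂.1
  have hsymm : ∀ {p q : V}, (F p ∩ F q).Nonempty → (F q ∩ F p).Nonempty := by
    intro p q hpq; rwa [Set.inter_comm] at hpq
  have key : ∀ p q : V, (F p ∩ F q).Nonempty → t p ≤ t q →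
      t q - t p ≤ w p ∧ t q - t p ≤ h q := by
    intro p q hpq hle
    rw [hF p, hF q] at hpq
    exact (frame_inter (hw p) (hh q) hle).mp hpq
  have build : ∀ p q : V, t p ≤ t q → t q - t p ≤ w p → t q - t p ≤ h q →
      (F p ∩ F q).Nonempty := by
    intro p q hle h1 h2
    rw [hF p, hF q]
    exact (frame_inter (hw p) (hh q) hle).mpr ⟨h1, h2⟩
  have hu₂min : t u₂ ≤ min (t b₂) (t r₂) := le_min hd₂b hd₂r
  have h1max : max (t b₁) (t r₁) - t u₁ ≤ w u₁ := by
    rcases max_cases (t b₁) (t r₁) with ⟨he, _⟩ | ⟨he, _⟩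
    · have := (key u₁ b₁ (hsymm hIb₁) (by linarith)).1; linarith
    · have := (key u₁ r₁ (hsymm hIr₁) (by linarith)).1; linarith
  have h2max : max (t b₂) (t r₂) - t u₂ ≤ w u₂ := by
    rcases max_cases (t b₂) (t r₂) with ⟨he, _⟩ | ⟨he, _⟩
    · have := (key u₂ b₂ (hsymm hIb₂) hd₂b).1; linarith
    · have := (key u₂ r₂ (hsymm hIr₂) hd₂r).1; linarith
  have e1 : |t b₁ - t r₁| = max (t b₁) (t r₁) - min (t b₁) (t r₁) :=
    abs_eq_max_sub_min _ _
  have e2 : |t b₂ - t r₂| = max (t b₂) (t r₂) - min (t b₂) (t r₂) :=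
    abs_eq_max_sub_min _ _
  have hm1l : min (t b₁) (t r₁) ≤ t b₁ := min_le_left _ _
  have hm1r : min (t b₁) (t r₁) ≤ t r₁ := min_le_right _ _
  have hM1l : t b₁ ≤ max (t b₁) (t r₁) := le_max_left _ _
  have hM1r : t r₁ ≤ max (t b₁) (t r₁) := le_max_right _ _
  have hm2l : min (t b₂) (t r₂) ≤ t b₂ := min_le_left _ _
  have hm2r : min (t b₂) (t r₂) ≤ t r₂ := min_le_right _ _
  have hM2l : t b₂ ≤ max (t b₂) (t r₂) := le_max_left _ _
  have hM2r : t r₂ ≤ max (t b₂) (t r₂) := le_max_right _ _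
  rcases hint with ⟨huγ, hγb, hbδ⟩ | ⟨hγu, huδ, hδb⟩
  · -- Case 1 : t u₁ < γ < b < δ
    rcases le_total (t u₂) (t u₁) with hA | hhB
    · -- subcase A : the vertex at γ intersects F u₁
      rcases min_cases (t b₂) (t r₂) with ⟨he, _⟩ | ⟨he, _⟩
      · have hhz : t b₂ - t u₂ ≤ h b₂ := (key u₂ b₂ (hsymm hIb₂) hd₂b).2
        have hI : (F u₁ ∩ F b₂).Nonempty :=
          build u₁ b₂ (by linarith) (by linarith) (by linarith)
        refine witness_contra hwit₁ ⟨hb₂B, hr₁R, hsymm hI, hIr₁⟩ ?_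
        rw [e1, abs_sub_lt_iff]
        constructor <;> linarith
      · have hhz : t r₂ - t u₂ ≤ h r₂ := (key u₂ r₂ (hsymm hIr₂) hd₂r).2
        have hI : (F u₁ ∩ F r₂).Nonempty :=
          build u₁ r₂ (by linarith) (by linarith) (by linarith)
        refine witness_contra hwit₁ ⟨hb₁B, hr₂R, hIb₁, hsymm hI⟩ ?_
        rw [e1, abs_sub_lt_iff]
        constructor <;> linarith
    · -- subcase B : the vertex at b intersects F u₂
      rcases max_cases (t b₁) (t r₁) with ⟨he, _⟩ | ⟨he, _⟩
      · have hhb : t b₁ - t u₁ ≤ h b₁ :=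
          (key u₁ b₁ (hsymm hIb₁) (by linarith)).2
        have hI : (F u₂ ∩ F b₁).Nonempty :=
          build u₂ b₁ (by linarith) (by linarith) (by linarith)
        refine witness_contra hwit₂ ⟨hb₁B, hr₂R, hsymm hI, hIr₂⟩ ?_
        rw [e2, abs_sub_lt_iff]
        constructor <;> linarith
      · have hhb : t r₁ - t u₁ ≤ h r₁ :=
          (key u₁ r₁ (hsymm hIr₁) (by linarith)).2
        have hI : (F u₂ ∩ F r₁).Nonempty :=
          build u₂ r₁ (by linarith) (by linarith) (by linarith)
        refine witness_contra hwit₂ ⟨hb₂B, hr₁R, hIb₂, hsymm hI⟩ ?_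
        rw [e2, abs_sub_lt_iff]
        constructor <;> linarith
  · -- Case 2 : γ < t u₁ < δ < b ; the vertex at δ intersects F u₁
    rcases max_cases (t b₂) (t r₂) with ⟨he, _⟩ | ⟨he, _⟩
    · have hhz : t b₂ - t u₂ ≤ h b₂ := (key u₂ b₂ (hsymm hIb₂) hd₂b).2
      have hI : (F u₁ ∩ F b₂).Nonempty :=
        build u₁ b₂ (by linarith) (by linarith) (by linarith)
      refine witness_contra hwit₁ ⟨hb₂B, hr₁R, hsymm hI, hIr₁⟩ ?_
      rw [e1, abs_sub_lt_iff]
      constructor <;> linarith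
    · have hhz : t r₂ - t u₂ ≤ h r₂ := (key u₂ r₂ (hsymm hIr₂) hd₂r).2
      have hI : (F u₁ ∩ F r₂).Nonempty :=
        build u₁ r₂ (by linarith) (by linarith) (by linarith)
      refine witness_contra hwit₁ ⟨hb₁B, hr₂R, hIb₁, hsymm hI⟩ ?_
      rw [e1, abs_sub_lt_iff]
      constructor <;> linarith
end

section
/- Under the setup, the bipartite graph H = (B ∪ R, E') satisfies the local exchange property: for every subset B' ⊆ B, the set (B \ B') ∪ { r ∈ R : ∃ b ∈ B', (b,r) ∈ E' } is a dominating set of G. -/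
/-- The bipartite graph `H = (B ∪ R, E')` satisfies the local exchange property: for every
`B' ⊆ B`, the set `(B \ B') ∪ N_H(B')` is a dominating set of `G`. -/
theorem local_exchange_property {V : Type*} [Fintype V]
    (t h w : V → ℝ) (hh : ∀ v, 0 ≤ h v) (hw : ∀ v, 0 ≤ w v)
    (F : V → Set (ℝ × ℝ)) (hF : ∀ v, F v = Aframe (t v) (h v) (w v))
    (B R : Set V) (hBR : Disjoint B R)
    (hB : IsDomSet (interGraph F) B) (hR : IsDomSet (interGraph F) R)
    (B' : Set V) (hB' : B' ⊆ B) :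
    IsDomSet (interGraph F)
      ((B \ B') ∪ {r | r ∈ R ∧ ∃ b ∈ B', InE' F t B R b r}) := by

  intro v
  -- Each frame is nonempty: it contains its corner.
  have hne : ∀ u, (F u).Nonempty := by
    intro u
    refine ⟨(t u, -(t u)), ?_⟩
    rw [hF u]
    left
    refine ⟨rfl, le_refl _, ?_⟩
    show -(t u) ≤ -(t u) + h u
    linarith [hh u]
  -- Get some b0 ∈ B whose frame meets F v.
  obtain ⟨b0, hb0B, hb0⟩ : ∃ b0 ∈ B, (F b0 ∩ F v).Nonempty := by
    rcases hB v with hv | ⟨u, huB, hu⟩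
    · exact ⟨v, hv, by rw [Set.inter_self]; exact hne v⟩
    · exact ⟨u, huB, hu.2⟩
  obtain ⟨r0, hr0R, hr0⟩ : ∃ r0 ∈ R, (F r0 ∩ F v).Nonempty := by
    rcases hR v with hv | ⟨u, huR, hu⟩
    · exact ⟨v, hv, by rw [Set.inter_self]; exact hne v⟩
    · exact ⟨u, huR, hu.2⟩
  -- Minimize corner distance over S(v).
  set S : Set (V × V) := {p | InS F B R v p.1 p.2} with hS
  have hSne : S.Nonempty := ⟨(b0, r0), hb0B, hr0R, hb0, hr0⟩
  obtain ⟨⟨b, r⟩, hmem, hmin⟩ :=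
    Set.exists_min_image S (fun p => cornerDist t p.1 p.2) (Set.toFinite S) hSne
  have hwit : IsWitness F t B R v b r :=
    ⟨hmem, fun b' r' h' => hmin (b', r') h'⟩
  obtain ⟨hbB, hrR, hbv, hrv⟩ := hmem
  by_cases hb' : b ∈ B'
  · -- (b, r) ∈ E', so r is in the neighborhood set.
    have hrD : r ∈ {r | r ∈ R ∧ ∃ b ∈ B', InE' F t B R b r} :=
      ⟨hrR, b, hb', v, hwit⟩
    by_cases hrv' : r = v
    · left; right; rw [← hrv']; exact hrD
    · right; exact ⟨r, Or.inr hrD, hrv', hrv⟩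
  · by_cases hbv' : b = v
    · left; left; rw [← hbv']; exact ⟨hbB, hb'⟩
    · right; exact ⟨b, Or.inl ⟨hbB, hb'⟩, hbv', hbv⟩
end

section
/- For reals p < q and r < s with {p,q} ∩ {r,s} = ∅, the below-diagonal hooks H(p,q) and H(r,s) have nonempty intersection if and only if p < r < q < s or r < p < s < q (i.e., if and only if the intervals (p,q) and (r,s) interleave). -/
/-- The below-diagonal hook `H(p,q) = ({p} × [-q, -p]) ∪ ([p, q] × {-q})`. -/
def Hook (p q : ℝ) : Set (ℝ × ℝ) :=
  ({p} : Set ℝ) ×ˢ Set.Icc (-q) (-p) ∪ Set.Icc p q ×ˢ ({-q} : Set ℝ)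

/-- Two below-diagonal hooks with distinct endpoints intersect iff their endpoint
intervals interleave. -/
theorem hook_inter_iff_interleave (p q r s : ℝ) (hpq : p < q) (hrs : r < s)
    (hdisj : ({p, q} : Set ℝ) ∩ {r, s} = ∅) :
    (Hook p q ∩ Hook r s).Nonempty ↔ Interleave p q r s := by
  have h := Set.eq_empty_iff_forall_notMem.mp hdisj
  have hpr : p ≠ r := fun e => h p ⟨Or.inl rfl, Or.inl e⟩
  have hps : p ≠ s := fun e => h p ⟨Or.inl rfl, Or.inr e⟩
  have hqr : q ≠ r := fun e => h q ⟨Or.inr rfl, Or.inl e⟩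
  have hqs : q ≠ s := fun e => h q ⟨Or.inr rfl, Or.inr e⟩
  constructor
  · rintro ⟨⟨x, y⟩, h1, h2⟩
    simp only [Hook, Set.mem_union, Set.mem_prod, Set.mem_singleton_iff, Set.mem_Icc] at h1 h2
    unfold Interleave
    rcases h1 with ⟨hx, hy1, hy2⟩ | ⟨⟨hx1, hx2⟩, hy⟩ <;>
      rcases h2 with ⟨hx', hy1', hy2'⟩ | ⟨⟨hx1', hx2'⟩, hy'⟩
    · exact absurd (hx ▸ hx') hpr
    · -- x = p, y = -s : r < p < s < q
      subst hx; subst hy'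
      right
      refine ⟨lt_of_le_of_ne hx1' (Ne.symm hpr), lt_of_le_of_ne hx2' hps, ?_⟩
      have : s ≤ q := by linarith
      exact lt_of_le_of_ne this (Ne.symm hqs)
    · -- y = -q, x = r : p < r < q < s
      subst hx'; subst hy
      left
      refine ⟨lt_of_le_of_ne hx1 hpr, lt_of_le_of_ne hx2 (Ne.symm hqr), ?_⟩
      have : q ≤ s := by linarith
      exact lt_of_le_of_ne this hqs
    · exact absurd (neg_injective (hy ▸ hy')) hqs
  · rintro (⟨h1, h2, h3⟩ | ⟨h1, h2, h3⟩)
    · exact ⟨(r, -q), Or.inr ⟨⟨h1.le, h2.le⟩, rfl⟩,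
        Or.inl ⟨rfl, show -s ≤ -q by linarith, show -q ≤ -r by linarith⟩⟩
    · exact ⟨(p, -s), Or.inl ⟨rfl, show -q ≤ -s by linarith, show -s ≤ -p by linarith⟩,
        Or.inr ⟨⟨h1.le, h2.le⟩, rfl⟩⟩
end

section
/- Let α, β : Fin n → [0, 2π) satisfy α i < β i for every i, and suppose the 2n values {α i} ∪ {β i} are pairwise distinct. Then the intersection graph of the chords (the segments [P(α i), P(β i)] of the unit circle) equals the intersection graph of the below-diagonal hooks H(α i, β i): for all i ≠ j, [P(α i), P(β i)] ∩ [P(α j), P(β j)] ≠ ∅ if and only if H(α i, β i) ∩ H(α j, β j) ≠ ∅. In particular, for every k, the chord intersection graph has a dominating set of cardinality k if and only if the hook intersection graph does. -/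
/-- The point of the unit circle at angle `θ`. -/
noncomputable def Pt (θ : ℝ) : ℝ × ℝ := (Real.cos θ, Real.sin θ)

noncomputable def side (a b : ℝ) (x : ℝ × ℝ) : ℝ :=
  (Real.sin b - Real.sin a) * (x.1 - Real.cos a) - (Real.cos b - Real.cos a) * (x.2 - Real.sin a)

lemma key_s11 (x y : ℝ) : Real.sin x + Real.sin y - Real.sin (x+y)
    = 4 * Real.sin ((x+y)/2) * Real.sin (x/2) * Real.sin (y/2) := by
  have hsx : Real.sin x = 2 * Real.sin (x/2) * Real.cos (x/2) := by
    have := Real.sin_two_mul (x/2); rwa [show 2*(x/2) = x by ring] at this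
  have hsy : Real.sin y = 2 * Real.sin (y/2) * Real.cos (y/2) := by
    have := Real.sin_two_mul (y/2); rwa [show 2*(y/2) = y by ring] at this
  have hsxy : Real.sin (x+y) = 2 * Real.sin (x/2+y/2) * Real.cos (x/2+y/2) := by
    have := Real.sin_two_mul (x/2+y/2); rwa [show 2*(x/2+y/2) = x+y by ring] at this
  rw [hsx, hsy, hsxy, show (x+y)/2 = x/2 + y/2 by ring, Real.sin_add, Real.cos_add]
  have hu := Real.sin_sq_add_cos_sq (x/2)
  have hv := Real.sin_sq_add_cos_sq (y/2)
  linear_combination (-2*Real.sin (x/2)*Real.cos (x/2)) * hv + (-2*Real.sin (y/2)*Real.cos (y/2)) * hu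

lemma side_pt (a b θ : ℝ) : side a b (Pt θ)
    = 4 * Real.sin ((b-a)/2) * Real.sin ((b-θ)/2) * Real.sin ((θ-a)/2) := by
  have h1 : side a b (Pt θ) = Real.sin (b-θ) + Real.sin (θ-a) - Real.sin (b-a) := by
    rw [Real.sin_sub, Real.sin_sub, Real.sin_sub]; simp [side, Pt]; ring
  have hk := key_s11 (b-θ) (θ-a)
  rw [show (b-θ)+(θ-a) = b - a by ring] at hk
  rw [h1, hk]

lemma sin_half_pos {x : ℝ} (h0 : 0 < x) (h2 : x < 2*Real.pi) : 0 < Real.sin (x/2) :=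
  Real.sin_pos_of_pos_of_lt_pi (by linarith) (by linarith)

lemma sin_half_neg {x : ℝ} (h0 : -(2*Real.pi) < x) (h2 : x < 0) : Real.sin (x/2) < 0 := by
  have : 0 < Real.sin (-x/2) := Real.sin_pos_of_pos_of_lt_pi (by linarith) (by linarith)
  have h := Real.sin_neg (x/2)
  rw [show -(x/2) = -x/2 by ring] at h
  linarith

lemma side_pos {a b θ : ℝ} (h0 : 0 ≤ a) (h2 : b < 2*Real.pi) (h1 : a < θ) (h3 : θ < b) :
    0 < side a b (Pt θ) := by
  rw [side_pt]
  have s1 := sin_half_pos (x := b - a) (by linarith) (by linarith)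
  have s2 := sin_half_pos (x := b - θ) (by linarith) (by linarith)
  have s3 := sin_half_pos (x := θ - a) (by linarith) (by linarith)
  positivity

lemma side_neg_left {a b θ : ℝ} (h0 : 0 ≤ θ) (h2 : b < 2*Real.pi) (h1 : θ < a) (h3 : a < b) :
    side a b (Pt θ) < 0 := by
  rw [side_pt]
  have s1 := sin_half_pos (x := b - a) (by linarith) (by linarith)
  have s2 := sin_half_pos (x := b - θ) (by linarith) (by linarith)
  have s3 := sin_half_neg (x := θ - a) (by linarith) (by linarith)
  nlinarith [mul_pos s1 s2]

lemma side_neg_right {a b θ : ℝ} (h0 : 0 ≤ a) (h2 : θ < 2*Real.pi) (h1 : b < θ) (h3 : a < b) :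
    side a b (Pt θ) < 0 := by
  rw [side_pt]
  have s1 := sin_half_pos (x := b - a) (by linarith) (by linarith)
  have s2 := sin_half_neg (x := b - θ) (by linarith) (by linarith)
  have s3 := sin_half_pos (x := θ - a) (by linarith) (by linarith)
  nlinarith [mul_pos s1 s3]

lemma mem_segment_pair {p q x : ℝ × ℝ} :
    x ∈ segment ℝ p q ↔ ∃ u v : ℝ, 0 ≤ u ∧ 0 ≤ v ∧ u + v = 1 ∧
      x.1 = u * p.1 + v * q.1 ∧ x.2 = u * p.2 + v * q.2 := by
  constructor
  · rintro ⟨u, v, hu, hv, huv, rfl⟩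
    exact ⟨u, v, hu, hv, huv, by simp, by simp⟩
  · rintro ⟨u, v, hu, hv, huv, h1, h2⟩
    exact ⟨u, v, hu, hv, huv, by ext <;> simp [h1.symm, h2.symm]⟩

lemma side_comb {a b : ℝ} {p q x : ℝ × ℝ} (hx : x ∈ segment ℝ p q) :
    ∃ u v : ℝ, 0 ≤ u ∧ 0 ≤ v ∧ u + v = 1 ∧
      side a b x = u * side a b p + v * side a b q := by
  obtain ⟨u, v, hu, hv, huv, h1, h2⟩ := mem_segment_pair.1 hx
  refine ⟨u, v, hu, hv, huv, ?_⟩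
  simp only [side, h1, h2]
  have : v = 1 - u := by linarith
  subst this; ring

lemma side_endpoint1 (a b : ℝ) : side a b (Pt a) = 0 := by simp [side, Pt]

lemma side_endpoint2 (a b : ℝ) : side a b (Pt b) = 0 := by simp [side, Pt]; ring

lemma side_zero_of_mem {a b : ℝ} {x : ℝ × ℝ} (hx : x ∈ segment ℝ (Pt a) (Pt b)) :
    side a b x = 0 := by
  obtain ⟨u, v, _, _, _, h⟩ := side_comb (a := a) (b := b) hx
  rw [h, side_endpoint1, side_endpoint2]; ring

lemma side_pos_of_mem {a b : ℝ} {p q x : ℝ × ℝ} (hp : 0 < side a b p) (hq : 0 < side a b q)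
    (hx : x ∈ segment ℝ p q) : 0 < side a b x := by
  obtain ⟨u, v, hu, hv, huv, h⟩ := side_comb (a := a) (b := b) hx
  rw [h]
  rcases eq_or_lt_of_le hu with h0 | h0
  · have : v = 1 := by linarith
    rw [← h0, this]; simpa using hq
  · nlinarith [mul_nonneg hv hq.le]

lemma side_neg_of_mem {a b : ℝ} {p q x : ℝ × ℝ} (hp : side a b p < 0) (hq : side a b q < 0)
    (hx : x ∈ segment ℝ p q) : side a b x < 0 := by
  obtain ⟨u, v, hu, hv, huv, h⟩ := side_comb (a := a) (b := b) hx
  rw [h]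
  rcases eq_or_lt_of_le hu with h0 | h0
  · have : v = 1 := by linarith
    rw [← h0, this]; simpa using hq
  · nlinarith [mul_nonpos_of_nonneg_of_nonpos hv hq.le]

lemma pt_norm (θ : ℝ) : (Pt θ).1 ^ 2 + (Pt θ).2 ^ 2 = 1 := by
  simpa [Pt] using Real.cos_sq_add_sin_sq θ

lemma norm_le_of_mem {p q x : ℝ × ℝ} (hp : p.1 ^ 2 + p.2 ^ 2 = 1) (hq : q.1 ^ 2 + q.2 ^ 2 = 1)
    (hx : x ∈ segment ℝ p q) : x.1 ^ 2 + x.2 ^ 2 ≤ 1 := by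
  obtain ⟨u, v, hu, hv, huv, h1, h2⟩ := mem_segment_pair.1 hx
  have e : (u * p.1 + v * q.1) ^ 2 + (u * p.2 + v * q.2) ^ 2
      = 1 - u * v * ((p.1 - q.1) ^ 2 + (p.2 - q.2) ^ 2) := by
    linear_combination (u * (u + v)) * hp + (v * (u + v)) * hq + (u + v + 1) * huv
  have hnn : 0 ≤ u * v * ((p.1 - q.1) ^ 2 + (p.2 - q.2) ^ 2) := by positivity
  rw [h1, h2, e]; linarith

lemma mem_chord_of_side_zero {a b : ℝ} {x : ℝ × ℝ}
    (hD : 0 < (Real.cos b - Real.cos a) ^ 2 + (Real.sin b - Real.sin a) ^ 2)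
    (hx : side a b x = 0) (hn : x.1 ^ 2 + x.2 ^ 2 ≤ 1) :
    x ∈ segment ℝ (Pt a) (Pt b) := by
  set D1 := Real.cos b - Real.cos a with hD1
  set D2 := Real.sin b - Real.sin a with hD2
  set t := ((x.1 - Real.cos a) * D1 + (x.2 - Real.sin a) * D2) / (D1 ^ 2 + D2 ^ 2) with ht
  have hDne : D1 ^ 2 + D2 ^ 2 ≠ 0 := ne_of_gt hD
  have hcross : D2 * (x.1 - Real.cos a) - D1 * (x.2 - Real.sin a) = 0 := hx
  have hx1 : x.1 = (1 - t) * Real.cos a + t * Real.cos b := by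
    rw [ht]; field_simp
    linear_combination D2 * hcross + ((x.1 - Real.cos a) * D1 + (x.2 - Real.sin a) * D2) * hD1
  have hx2 : x.2 = (1 - t) * Real.sin a + t * Real.sin b := by
    rw [ht]; field_simp
    linear_combination (-D1) * hcross + ((x.1 - Real.cos a) * D1 + (x.2 - Real.sin a) * D2) * hD2
  have hna := Real.cos_sq_add_sin_sq a
  have hnb := Real.cos_sq_add_sin_sq b
  have hquad : x.1 ^ 2 + x.2 ^ 2 = 1 + t * (t - 1) * (D1 ^ 2 + D2 ^ 2) := by
    rw [hx1, hx2, hD1, hD2]; linear_combination (1 - t) * hna + t * hnb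
  have htt : t * (t - 1) ≤ 0 := by
    by_contra hc
    push_neg at hc
    nlinarith
  have ht0 : 0 ≤ t := by nlinarith
  have ht1 : t ≤ 1 := by nlinarith
  exact mem_segment_pair.2 ⟨1 - t, t, by linarith, ht0, by ring, by simpa [Pt] using hx1,
    by simpa [Pt] using hx2⟩

lemma side_affine (a b t : ℝ) (p q : ℝ × ℝ) :
    side a b ((1 - t) * p.1 + t * q.1, (1 - t) * p.2 + t * q.2)
      = (1 - t) * side a b p + t * side a b q := by
  simp only [side]; ring

lemma dist_sq_pos {a b : ℝ} (hab : a < b) (hb : b - a < 2 * Real.pi) :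
    0 < (Real.cos b - Real.cos a) ^ 2 + (Real.sin b - Real.sin a) ^ 2 := by
  have h1 : (Real.cos b - Real.cos a) ^ 2 + (Real.sin b - Real.sin a) ^ 2
      = 2 - 2 * Real.cos (b - a) := by
    rw [Real.cos_sub]
    linear_combination Real.cos_sq_add_sin_sq a + Real.cos_sq_add_sin_sq b
  have h2 : Real.cos (b - a) = 1 - 2 * Real.sin ((b - a) / 2) ^ 2 := by
    have := Real.cos_two_mul ((b - a) / 2)
    rw [show 2 * ((b - a) / 2) = b - a by ring] at this
    linear_combination this + 2 * Real.cos_sq_add_sin_sq ((b - a) / 2)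
  have h3 := sin_half_pos (x := b - a) (by linarith) (by linarith)
  rw [h1, h2]; nlinarith

lemma inter_of_interleave {a b c d : ℝ} (h0 : 0 ≤ a) (h2π : d < 2 * Real.pi)
    (h1 : a < c) (h2 : c < b) (h3 : b < d) :
    (segment ℝ (Pt a) (Pt b) ∩ segment ℝ (Pt c) (Pt d)).Nonempty := by
  have hsc : 0 < side a b (Pt c) := side_pos h0 (by linarith) h1 h2
  have hsd : side a b (Pt d) < 0 := side_neg_right h0 h2π h3 (by linarith)
  set sc := side a b (Pt c)
  set sd := side a b (Pt d)
  have hden : 0 < sc - sd := by linarith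
  set t := sc / (sc - sd) with ht
  have ht0 : 0 ≤ t := div_nonneg hsc.le hden.le
  have ht1 : t ≤ 1 := by rw [ht, div_le_one hden]; linarith
  set x : ℝ × ℝ := ((1 - t) * (Pt c).1 + t * (Pt d).1, (1 - t) * (Pt c).2 + t * (Pt d).2) with hxd
  have hxseg : x ∈ segment ℝ (Pt c) (Pt d) :=
    mem_segment_pair.2 ⟨1 - t, t, by linarith, ht0, by ring, rfl, rfl⟩
  have hside : side a b x = (1 - t) * sc + t * sd := side_affine a b t (Pt c) (Pt d)
  have hside0 : side a b x = 0 := by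
    rw [hside, ht]; field_simp; ring
  have hn : x.1 ^ 2 + x.2 ^ 2 ≤ 1 := norm_le_of_mem (pt_norm c) (pt_norm d) hxseg
  have hD := dist_sq_pos (a := a) (b := b) (by linarith) (by linarith)
  exact ⟨x, mem_chord_of_side_zero hD hside0 hn, hxseg⟩

lemma disjoint_of_same_sign {a b c d : ℝ}
    (h : (0 < side a b (Pt c) ∧ 0 < side a b (Pt d)) ∨
         (side a b (Pt c) < 0 ∧ side a b (Pt d) < 0)) :
    ¬ (segment ℝ (Pt a) (Pt b) ∩ segment ℝ (Pt c) (Pt d)).Nonempty := by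
  rintro ⟨x, hx1, hx2⟩
  have h0 := side_zero_of_mem hx1
  rcases h with ⟨hc, hd⟩ | ⟨hc, hd⟩
  · have := side_pos_of_mem hc hd hx2; linarith
  · have := side_neg_of_mem hc hd hx2; linarith

lemma chord_iff {a b c d : ℝ}
    (ha : a ∈ Set.Ico 0 (2 * Real.pi)) (hb : b ∈ Set.Ico 0 (2 * Real.pi))
    (hc : c ∈ Set.Ico 0 (2 * Real.pi)) (hd : d ∈ Set.Ico 0 (2 * Real.pi))
    (hab : a < b) (hcd : c < d)
    (hac : a ≠ c) (hbd : b ≠ d) (had : a ≠ d) (hcb : c ≠ b) :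
    (segment ℝ (Pt a) (Pt b) ∩ segment ℝ (Pt c) (Pt d)).Nonempty ↔
      ((a < c ∧ c < b ∧ b < d) ∨ (c < a ∧ a < d ∧ d < b)) := by
  obtain ⟨ha0, ha2⟩ := ha; obtain ⟨hb0, hb2⟩ := hb
  obtain ⟨hc0, hc2⟩ := hc; obtain ⟨hd0, hd2⟩ := hd
  constructor
  · intro hne
    rcases hac.lt_or_gt with h | h
    · -- a < c
      rcases hcb.lt_or_gt with h' | h'
      · -- c < b
        rcases hbd.lt_or_gt with h'' | h''
        · exact Or.inl ⟨h, h', h''⟩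
        · -- nested a < c < d < b : contradiction
          exact absurd hne (disjoint_of_same_sign (Or.inl
            ⟨side_pos ha0 hb2 h h', side_pos ha0 hb2 (by linarith) h''⟩))
      · -- b < c : disjoint
        exact absurd hne (disjoint_of_same_sign (Or.inr
          ⟨side_neg_right ha0 hc2 h' hab, side_neg_right ha0 hd2 (by linarith) hab⟩))
    · -- c < a
      rw [Set.inter_comm] at hne
      rcases had.lt_or_gt with h' | h'
      · -- a < d
        rcases hbd.lt_or_gt with h'' | h''
        · -- nested c < a < b < d
          exact absurd hne (disjoint_of_same_sign (Or.inl
            ⟨side_pos hc0 hd2 h (by linarith), side_pos hc0 hd2 (by linarith) h''⟩))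
        · exact Or.inr ⟨h, h', h''⟩
      · -- d < a : disjoint
        exact absurd hne (disjoint_of_same_sign (Or.inr
          ⟨side_neg_right hc0 ha2 h' hcd, side_neg_right hc0 hb2 (by linarith) hcd⟩))
  · rintro (⟨h1, h2, h3⟩ | ⟨h1, h2, h3⟩)
    · exact inter_of_interleave ha0 hd2 h1 h2 h3
    · rw [Set.inter_comm]
      exact inter_of_interleave hc0 hb2 h1 h2 h3


lemma mem_hook' {p q : ℝ} {x : ℝ × ℝ} :
    x ∈ Hook p q ↔ (x.1 = p ∧ -q ≤ x.2 ∧ x.2 ≤ -p) ∨ (p ≤ x.1 ∧ x.1 ≤ q ∧ x.2 = -q) := by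
  simp only [Hook, Set.mem_union, Set.mem_prod, Set.mem_singleton_iff, Set.mem_Icc, and_assoc]

lemma hook_iff {p q r s : ℝ} (hpq : p < q) (hrs : r < s)
    (hpr : p ≠ r) (hqs : q ≠ s) (hps : p ≠ s) (hrq : r ≠ q) :
    (Hook p q ∩ Hook r s).Nonempty ↔
      ((p < r ∧ r < q ∧ q < s) ∨ (r < p ∧ p < s ∧ s < q)) := by
  constructor
  · rintro ⟨x, hx1, hx2⟩
    rw [mem_hook'] at hx1 hx2
    rcases hx1 with ⟨e1, e2, e3⟩ | ⟨e1, e2, e3⟩ <;> rcases hx2 with ⟨f1, f2, f3⟩ | ⟨f1, f2, f3⟩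
    · exact absurd (e1 ▸ f1) hpr
    · refine Or.inr ⟨lt_of_le_of_ne (by linarith) (Ne.symm hpr), ?_, ?_⟩
      · exact lt_of_le_of_ne (by linarith) hps
      · have : -q ≤ -s := by linarith
        exact lt_of_le_of_ne (by linarith) (Ne.symm hqs)
    · refine Or.inl ⟨lt_of_le_of_ne (by linarith) hpr, ?_, ?_⟩
      · have : -s ≤ -q := by linarith
        exact lt_of_le_of_ne (by linarith) hrq
      · have : -s ≤ -q := by linarith
        exact lt_of_le_of_ne (by linarith) hqs
    · exfalso; apply hqs; have : -q = -s := by rw [← e3, f3]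
      linarith
  · rintro (⟨h1, h2, h3⟩ | ⟨h1, h2, h3⟩)
    · exact ⟨(r, -q), mem_hook'.2 (Or.inr ⟨h1.le, h2.le, rfl⟩),
        mem_hook'.2 (Or.inl ⟨rfl, show -s ≤ -q by linarith, show -q ≤ -r by linarith⟩)⟩
    · exact ⟨(p, -s), mem_hook'.2 (Or.inl ⟨rfl, show -q ≤ -s by linarith, show -s ≤ -p by linarith⟩),
        mem_hook'.2 (Or.inr ⟨h1.le, h2.le, rfl⟩)⟩

/-- The intersection graph of the chords `[P(α i), P(β i)]` of the unit circle equals the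
intersection graph of the below-diagonal hooks `H(α i, β i)`; in particular one has a
dominating set of cardinality `k` iff the other does. -/
theorem chord_graph_eq_hook_graph (n : ℕ) (α β : Fin n → ℝ)
    (hα : ∀ i, α i ∈ Set.Ico 0 (2 * Real.pi)) (hβ : ∀ i, β i ∈ Set.Ico 0 (2 * Real.pi))
    (hlt : ∀ i, α i < β i)
    (hαinj : Function.Injective α) (hβinj : Function.Injective β)
    (hαβ : ∀ i j, α i ≠ β j) :
    (∀ i j, i ≠ j →
      ((segment ℝ (Pt (α i)) (Pt (β i)) ∩ segment ℝ (Pt (α j)) (Pt (β j))).Nonempty ↔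
        (Hook (α i) (β i) ∩ Hook (α j) (β j)).Nonempty)) ∧
    (∀ k : ℕ,
      ((∃ D : Finset (Fin n), D.card = k ∧
          IsDomSet (interGraph fun i => segment ℝ (Pt (α i)) (Pt (β i))) ↑D) ↔
        (∃ D : Finset (Fin n), D.card = k ∧
          IsDomSet (interGraph fun i => Hook (α i) (β i)) ↑D))) := by
  have key_s11 : ∀ i j, i ≠ j →
      ((segment ℝ (Pt (α i)) (Pt (β i)) ∩ segment ℝ (Pt (α j)) (Pt (β j))).Nonempty ↔
        (Hook (α i) (β i) ∩ Hook (α j) (β j)).Nonempty) := by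
    intro i j hij
    have h1 := chord_iff (hα i) (hβ i) (hα j) (hβ j) (hlt i) (hlt j)
      (fun h => hij (hαinj h)) (fun h => hij (hβinj h)) (hαβ i j) (hαβ j i)
    have h2 := hook_iff (hlt i) (hlt j)
      (fun h => hij (hαinj h)) (fun h => hij (hβinj h)) (hαβ i j) (hαβ j i)
    exact h1.trans h2.symm
  have hg : (interGraph fun i => segment ℝ (Pt (α i)) (Pt (β i)))
      = (interGraph fun i => Hook (α i) (β i)) := by
    ext u v
    show (u ≠ v ∧ _) ↔ (u ≠ v ∧ _)
    constructor
    · rintro ⟨h, hne⟩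
      exact ⟨h, (key_s11 u v h).mp hne⟩
    · rintro ⟨h, hne⟩
      exact ⟨h, (key_s11 u v h).mpr hne⟩
  exact ⟨key_s11, fun k => by rw [hg]⟩
end

section
/- Let n, m be natural numbers and let C : Fin m → Finset (Fin n) × Bool encode a monotone CNF formula (clause j has variable set (C j).1 and is positive if (C j).2 = true, negative if (C j).2 = false). Let H be the simple graph on the vertex set (Fin n × Fin 3) ⊕ Fin m whose edges are exactly: {(i,0),(i,1)}, {(i,0),(i,2)}, {(i,1),(i,2)} for each i : Fin n; {(i,0), c_j} for each i, j with (C j).2 = true and i ∈ (C j).1; and {(i,1), c_j} for each i, j with (C j).2 = false and i ∈ (C j).1 (where c_j denotes the clause vertex for j). Then H has a dominating set of cardinality at most n if and only if the formula is satisfiable, i.e., there exists σ : Fin n → Bool such that for every j : Fin m there is some i ∈ (C j).1 with σ i = (C j).2. -/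
/-- Vertices: a triple of frames `(i,0), (i,1), (i,2)` per variable `i`, plus one clause
vertex per clause `j`. -/
def Vtx (n m : ℕ) := (Fin n × Fin 3) ⊕ Fin m

/-- Base relation generating the edges of the construction: the triangle on each variable
triple, and edges between `(i,0)` (resp. `(i,1)`) and the positive (resp. negative)
clauses containing variable `i`. -/
def rel13 {n m : ℕ} (C : Fin m → Finset (Fin n) × Bool) : Vtx n m → Vtx n m → Prop
  | Sum.inl (i, _), Sum.inl (i', _) => i = i'
  | Sum.inl (i, k), Sum.inr j =>
      ((k = 0 ∧ (C j).2 = true) ∨ (k = 1 ∧ (C j).2 = false)) ∧ i ∈ (C j).1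
  | _, _ => False

/-- The graph `H` of the reduction. -/
def H13 {n m : ℕ} (C : Fin m → Finset (Fin n) × Bool) : SimpleGraph (Vtx n m) :=
  SimpleGraph.fromRel (rel13 C)

instance (n m : ℕ) : DecidableEq (Vtx n m) := by unfold Vtx; infer_instance

/-- `H` has a dominating set of cardinality at most `n` iff the monotone CNF formula
encoded by `C` is satisfiable. -/
theorem domset_iff_monotone_sat (n m : ℕ) (C : Fin m → Finset (Fin n) × Bool) :
    (∃ D : Finset (Vtx n m), D.card ≤ n ∧ IsDomSet (H13 C) ↑D) ↔
      (∃ σ : Fin n → Bool, ∀ j : Fin m, ∃ i ∈ (C j).1, σ i = (C j).2) := by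
  classical
  constructor
  · rintro ⟨D, hcard, hdom⟩
    set T : Fin n → Finset (Vtx n m) := fun i =>
      {Sum.inl (i,0), Sum.inl (i,1), Sum.inl (i,2)} with hT
    -- each variable group meets D
    have hTne : ∀ i, (D ∩ T i).Nonempty := by
      intro i
      rcases hdom (Sum.inl (i, 2)) with h | ⟨u, huD, hadj⟩
      · exact ⟨_, Finset.mem_inter.2 ⟨h, Finset.mem_insert_of_mem (Finset.mem_insert_of_mem (Finset.mem_singleton_self _))⟩⟩
      · refine ⟨u, Finset.mem_inter.2 ⟨huD, ?_⟩⟩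
        erw [H13, SimpleGraph.fromRel_adj] at hadj
        obtain ⟨hne, h | h⟩ := hadj
        · rcases u with ⟨i', k⟩ | j
          · obtain rfl : i' = i := h
            fin_cases k <;> simp only [hT] <;> erw [Finset.mem_insert, Finset.mem_insert, Finset.mem_singleton] <;> tauto
          · exact absurd h (by simp [rel13])
        · rcases u with ⟨i', k⟩ | j
          · obtain rfl : i = i' := h
            fin_cases k <;> simp only [hT] <;> erw [Finset.mem_insert, Finset.mem_insert, Finset.mem_singleton] <;> tauto
          · simp only [rel13] at h
            rcases h.1 with ⟨h2, _⟩ | ⟨h2, _⟩ <;> exact absurd h2 (by decide)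
    have hdisj : ∀ a ∈ (Finset.univ : Finset (Fin n)), ∀ b ∈ (Finset.univ : Finset (Fin n)),
        a ≠ b → Disjoint (D ∩ T a) (D ∩ T b) := by
      intro a _ b _ hab
      refine Finset.disjoint_left.2 ?_
      intro x hxa hxb
      have h1 := (Finset.mem_inter.1 hxa).2
      have h2 := (Finset.mem_inter.1 hxb).2
      simp only [hT] at h1; erw [Finset.mem_insert, Finset.mem_insert, Finset.mem_singleton] at h1
      rcases h1 with rfl | rfl | rfl <;>
        (simp only [hT] at h2; erw [Finset.mem_insert, Finset.mem_insert, Finset.mem_singleton] at h2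
         rcases h2 with h2 | h2 | h2 <;>
           (injection h2 with h; exact hab (congrArg Prod.fst h)))
    have hsub : Finset.univ.biUnion (fun i => D ∩ T i) ⊆ D := by
      intro x hx
      obtain ⟨i, _, hx⟩ := Finset.mem_biUnion.1 hx
      exact (Finset.mem_inter.1 hx).1
    have hsum : ∑ i, (D ∩ T i).card = (Finset.univ.biUnion (fun i => D ∩ T i)).card :=
      (Finset.card_biUnion hdisj).symm
    have hge : n ≤ ∑ i, (D ∩ T i).card := by
      calc n = ∑ _i : Fin n, 1 := by simp
        _ ≤ ∑ i, (D ∩ T i).card :=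
          Finset.sum_le_sum fun i _ => Finset.card_pos.2 (hTne i)
    have hle : ∑ i, (D ∩ T i).card ≤ n := by
      rw [hsum]
      exact le_trans (Finset.card_le_card hsub) hcard
    have hsumeq : ∑ i, (D ∩ T i).card = n := le_antisymm hle hge
    have hDeq : Finset.univ.biUnion (fun i => D ∩ T i) = D := by
      refine Finset.eq_of_subset_of_card_le hsub ?_
      rw [← hsum, hsumeq]; exact hcard
    have hone : ∀ i, (D ∩ T i).card = 1 := by
      by_contra hcon
      push_neg at hcon
      obtain ⟨i0, hi0⟩ := hcon
      have h2 : 1 < (D ∩ T i0).card :=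
        lt_of_le_of_ne (Finset.card_pos.2 (hTne i0)) (Ne.symm hi0)
      have : (∑ _i : Fin n, 1) < ∑ i, (D ∩ T i).card :=
        Finset.sum_lt_sum (fun i _ => Finset.card_pos.2 (hTne i))
          ⟨i0, Finset.mem_univ _, h2⟩
      simp [hsumeq] at this
    have hnoClause : ∀ j : Fin m, (Sum.inr j : Vtx n m) ∉ D := by
      intro j hj
      rw [← hDeq] at hj
      obtain ⟨i, _, hj⟩ := Finset.mem_biUnion.1 hj
      have := (Finset.mem_inter.1 hj).2
      simp only [hT] at this; erw [Finset.mem_insert, Finset.mem_insert, Finset.mem_singleton] at this; simp at this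
    refine ⟨fun i => decide (Sum.inl (i, (0 : Fin 3)) ∈ D), ?_⟩
    intro j
    rcases hdom (Sum.inr j) with h | ⟨u, huD, hadj⟩
    · exact absurd (Finset.mem_coe.1 h) (hnoClause j)
    · erw [H13, SimpleGraph.fromRel_adj] at hadj
      obtain ⟨hne, h | h⟩ := hadj
      · rcases u with ⟨i, k⟩ | j'
        · simp only [rel13] at h
          refine ⟨i, h.2, ?_⟩
          rcases h.1 with ⟨rfl, hpos⟩ | ⟨rfl, hneg⟩
          · have : Sum.inl (i, (0 : Fin 3)) ∈ D := huD
            simp [hpos, this]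
          · have h0 : Sum.inl (i, (0 : Fin 3)) ∉ D := by
              intro h0
              have ha : Sum.inl (i, (0 : Fin 3)) ∈ D ∩ T i :=
                Finset.mem_inter.2 ⟨h0, Finset.mem_insert_self _ _⟩
              have hb : (Sum.inl (i, (1 : Fin 3)) : Vtx n m) ∈ D ∩ T i :=
                Finset.mem_inter.2 ⟨huD, Finset.mem_insert_of_mem (Finset.mem_insert_self _ _)⟩
              have heq := Finset.card_le_one.1 (le_of_eq (hone i)) _ ha _ hb
              injection heq with h
              have h01 : (0 : Fin 3) = 1 := congrArg Prod.snd h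
              exact absurd h01 (by decide)
            simp [hneg, h0]
        · exact absurd h (by simp [rel13])
      · exact absurd h (by simp [rel13])
  · rintro ⟨σ, hσ⟩
    refine ⟨Finset.univ.image (fun i => Sum.inl (i, if σ i then 0 else 1)), ?_, ?_⟩
    · exact le_trans Finset.card_image_le (by simp)
    · intro v
      rcases v with ⟨i, k⟩ | j
      · by_cases hk : (Sum.inl (i, k) : Vtx n m) = Sum.inl (i, if σ i then 0 else 1)
        · left; rw [hk]; exact Finset.mem_coe.2 (Finset.mem_image_of_mem _ (Finset.mem_univ i))
        · right
          refine ⟨Sum.inl (i, if σ i then 0 else 1), Finset.mem_coe.2 (Finset.mem_image_of_mem _ (Finset.mem_univ i)), ?_⟩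
          erw [H13, SimpleGraph.fromRel_adj]
          exact ⟨Ne.symm hk, Or.inl rfl⟩
      · right
        obtain ⟨i, hi, hσi⟩ := hσ j
        cases hb : (C j).2 with
        | true =>
          refine ⟨Sum.inl (i, (0 : Fin 3)), ?_, ?_⟩
          · erw [Finset.coe_image, Set.mem_image]
            exact ⟨i, by simp, by simp [hσi, hb]; rfl⟩
          · erw [H13, SimpleGraph.fromRel_adj]
            exact ⟨by exact Sum.inl_ne_inr, Or.inl ⟨Or.inl ⟨rfl, hb⟩, hi⟩⟩
        | false =>
          refine ⟨Sum.inl (i, (1 : Fin 3)), ?_, ?_⟩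
          · erw [Finset.coe_image, Set.mem_image]
            exact ⟨i, by simp, by simp [hσi, hb]; rfl⟩
          · erw [H13, SimpleGraph.fromRel_adj]
            exact ⟨by exact Sum.inl_ne_inr, Or.inl ⟨Or.inr ⟨rfl, hb⟩, hi⟩⟩
end

section
/- Let a, b : Fin n → ℝ take positive values with a injective and b injective, and let F i = T(a i, b i) be the corresponding axes-crossing L-frames. Then for all i ≠ j, F i ∩ F j ≠ ∅ if and only if (a i - a j) · (b i - b j) < 0. (Hence the intersection graph of L-frames that all cross a fixed vertical line and a fixed horizontal line equals the inversion graph of two linear orders, i.e., it is a permutation graph.) -/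
/-- The axes-crossing L-frame `T(a,b) = ({-a} × [-b, 0]) ∪ ([-a, 0] × {-b})`. -/
def Tframe (a b : ℝ) : Set (ℝ × ℝ) :=
  ({-a} : Set ℝ) ×ˢ Set.Icc (-b) 0 ∪ Set.Icc (-a) 0 ×ˢ ({-b} : Set ℝ)

lemma Tframe_key {a1 b1 a2 b2 : ℝ} (ha1 : 0 < a1) (hb2 : 0 < b2)
    (hlt : a1 < a2) (hbne : b1 ≠ b2) :
    (Tframe a1 b1 ∩ Tframe a2 b2).Nonempty ↔ b2 < b1 := by
  constructor
  · rintro ⟨⟨x, y⟩, h1, h2⟩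
    simp only [Tframe, Set.mem_union, Set.mem_prod, Set.mem_singleton_iff,
      Set.mem_Icc] at h1 h2
    rcases h1 with ⟨hx1, hy1, -⟩ | ⟨⟨hx1, -⟩, hy1⟩ <;>
      rcases h2 with ⟨hx2, hy2, -⟩ | ⟨⟨hx2, -⟩, hy2⟩
    · exact absurd (neg_injective (hx1.symm.trans hx2)) hlt.ne
    · subst hx1 hy2
      have : b2 ≤ b1 := by linarith
      exact lt_of_le_of_ne this (Ne.symm hbne)
    · subst hx2 hy1
      linarith
    · subst hy1; exact absurd (neg_injective hy2) hbne
  · intro hlt2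
    exact ⟨(-a1, -b2),
      Or.inl ⟨rfl, ⟨show -b1 ≤ -b2 by linarith, show -b2 ≤ (0:ℝ) by linarith⟩⟩,
      Or.inr ⟨⟨show -a2 ≤ -a1 by linarith, show -a1 ≤ (0:ℝ) by linarith⟩, rfl⟩⟩

/-- Two axes-crossing L-frames (from a family with injective parameters) intersect iff
the corresponding parameter pairs form an inversion: the intersection graph is the
permutation graph of the two linear orders. -/
theorem axes_crossing_frames_inter_iff_inversion (n : ℕ) (a b : Fin n → ℝ)
    (ha : ∀ i, 0 < a i) (hb : ∀ i, 0 < b i)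
    (hainj : Function.Injective a) (hbinj : Function.Injective b)
    (F : Fin n → Set (ℝ × ℝ)) (hF : ∀ i, F i = Tframe (a i) (b i)) :
    ∀ i j, i ≠ j → ((F i ∩ F j).Nonempty ↔ (a i - a j) * (b i - b j) < 0) := by
  intro i j hij
  rw [hF, hF]
  have hane : a i ≠ a j := fun h => hij (hainj h)
  have hbne : b i ≠ b j := fun h => hij (hbinj h)
  rcases hane.lt_or_gt with h | h
  · rw [Tframe_key (ha i) (hb j) h hbne]
    constructor
    · intro h2; nlinarith
    · intro h2; nlinarith
  · rw [Set.inter_comm, Tframe_key (ha j) (hb i) h hbne.symm]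
    constructor
    · intro h2; nlinarith
    · intro h2; nlinarith
end

section
/- Let E be a finite set of pairs of natural numbers (the edges of a bipartite graph with parts indexed by the first and second coordinates), and for e = (i,j) ∈ E let F e = T(i+1, j+1) be the corresponding axes-crossing L-frame. Then for every natural number k, the following are equivalent: (1) there is S ⊆ E with |S| ≤ k such that every e ∈ E shares a coordinate with some f ∈ S (i.e., e.1 = f.1 or e.2 = f.2) — an edge dominating set of size at most k; (2) there is D ⊆ E with |D| ≤ k such that every e ∈ E is in D or there exists f ∈ D with f ≠ e and F e ∩ F f infinite — a dominating set of size at most k of the edge-intersection graph of the frames. -/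
lemma tframe_inter_infinite_iff {a b a' b' : ℝ} (ha : 0 < a) (hb : 0 < b)
    (ha' : 0 < a') (hb' : 0 < b') :
    (Tframe a b ∩ Tframe a' b').Infinite ↔ a = a' ∨ b = b' := by
  constructor
  · intro h
    by_contra hc
    push_neg at hc
    obtain ⟨haa, hbb⟩ := hc
    apply h
    apply Set.Finite.subset (({((-a, -b')), ((-a', -b))} : Set (ℝ × ℝ)).toFinite)
    rintro ⟨x, y⟩ ⟨h1, h2⟩
    simp only [Tframe, Set.mem_union, Set.mem_prod, Set.mem_singleton_iff] at h1 h2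
    rcases h1 with ⟨hx, _⟩ | ⟨_, hy⟩ <;> rcases h2 with ⟨hx', _⟩ | ⟨_, hy'⟩
    · exact absurd (neg_injective (hx ▸ hx')) haa
    · simp [hx, hy']
    · simp [hx', hy]
    · exact absurd (neg_injective (hy ▸ hy')) hbb
  · intro h
    rcases h with rfl | rfl
    · have hinf : (Set.Icc (-(min b b')) (0:ℝ)).Infinite :=
        Set.Icc_infinite (by simp [lt_min hb hb'])
      have := hinf.image (f := fun y => ((-a, y) : ℝ × ℝ))
        (fun x _ y _ hxy => (Prod.mk.injEq _ _ _ _ ▸ hxy).2)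
      apply this.mono
      rintro ⟨x, y⟩ ⟨t, ht, heq⟩
      obtain ⟨h1, h2⟩ := Set.mem_Icc.mp ht
      cases heq
      have hl := min_le_left b b'
      have hr := min_le_right b b'
      constructor <;> apply Set.mem_union_left <;>
        exact Set.mem_prod.mpr ⟨rfl, Set.mem_Icc.mpr ⟨by linarith, h2⟩⟩
    · have hinf : (Set.Icc (-(min a a')) (0:ℝ)).Infinite :=
        Set.Icc_infinite (by simp [lt_min ha ha'])
      have := hinf.image (f := fun x => ((x, -b) : ℝ × ℝ))
        (fun x _ y _ hxy => (Prod.mk.injEq _ _ _ _ ▸ hxy).1)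
      apply this.mono
      rintro ⟨x, y⟩ ⟨t, ht, heq⟩
      obtain ⟨h1, h2⟩ := Set.mem_Icc.mp ht
      cases heq
      have hl := min_le_left a a'
      have hr := min_le_right a a'
      constructor <;> apply Set.mem_union_right <;>
        exact Set.mem_prod.mpr ⟨Set.mem_Icc.mpr ⟨by linarith, h2⟩, rfl⟩

/-- A bipartite graph given by a finite edge set `E ⊆ ℕ × ℕ` has an edge dominating set of
size at most `k` iff the edge-intersection graph of the L-frames `T(i+1, j+1)`, `(i,j) ∈ E`,
has a dominating set of size at most `k`. -/
theorem edge_domset_iff_epg_domset (E : Finset (ℕ × ℕ)) (k : ℕ) :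
    (∃ S ⊆ E, S.card ≤ k ∧ ∀ e ∈ E, ∃ f ∈ S, e.1 = f.1 ∨ e.2 = f.2) ↔
      (∃ D ⊆ E, D.card ≤ k ∧ ∀ e ∈ E, e ∈ D ∨ ∃ f ∈ D, f ≠ e ∧
        (Tframe ((e.1 : ℝ) + 1) ((e.2 : ℝ) + 1) ∩
          Tframe ((f.1 : ℝ) + 1) ((f.2 : ℝ) + 1)).Infinite) := by
  have key : ∀ e f : ℕ × ℕ,
      (Tframe ((e.1 : ℝ) + 1) ((e.2 : ℝ) + 1) ∩
        Tframe ((f.1 : ℝ) + 1) ((f.2 : ℝ) + 1)).Infinite ↔ (e.1 = f.1 ∨ e.2 = f.2) := by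
    intro e f
    rw [tframe_inter_infinite_iff (by positivity) (by positivity) (by positivity) (by positivity)]
    constructor <;> rintro (h | h)
    · left; exact_mod_cast add_left_injective 1 h
    · right; exact_mod_cast add_left_injective 1 h
    · left; rw [h]
    · right; rw [h]
  constructor
  · rintro ⟨S, hSE, hScard, hdom⟩
    refine ⟨S, hSE, hScard, fun e he => ?_⟩
    obtain ⟨f, hfS, hor⟩ := hdom e he
    by_cases hfe : f = e
    · left; rwa [hfe] at hfS
    · right; exact ⟨f, hfS, hfe, (key e f).mpr hor⟩
  · rintro ⟨D, hDE, hDcard, hdom⟩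
    refine ⟨D, hDE, hDcard, fun e he => ?_⟩
    rcases hdom e he with heD | ⟨f, hfD, _, hinf⟩
    · exact ⟨e, heD, Or.inl rfl⟩
    · exact ⟨f, hfD, (key e f).mp hinf⟩
end
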